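/- Gradient of the Symmetric cross entropy Loss with α = β = 1: for a one-hot label y and clipping constant A < 0, the loss ℓ_sl(z) = -log p_y(z) - A · (1 - p_y(z)) of the softmax probabilities satisfies ∂ℓ_sl/∂z_j = (p_j(z) - 1) - (A · p_j(z)² - A · p_j(z)) when j = y, and ∂ℓ_sl/∂z_j = p_j(z) - A · p_j(z) · p_y(z) when j ≠ y. -/

import Mathlib

open Finset

/-- Softmax probabilities: `p_k(z) = exp(z k) / ∑_j exp(z j)`. -/
noncomputable def softmax {K : ℕ} (z : Fin K → ℝ) (k : Fin K) : ℝ :=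
  Real.exp (z k) / ∑ j, Real.exp (z j)

/-- Cross entropy loss of the softmax probabilities with one-hot target at `y`. -/
noncomputable def ceLoss {K : ℕ} (y : Fin K) (z : Fin K → ℝ) : ℝ :=
  -Real.log (softmax z y)

/-- Reverse Cross Entropy loss of the softmax probabilities with one-hot target at `y`
and clipping constant `A`: `ℓ_rce(z) = -A · (1 - p_y(z))`. -/
noncomputable def rceLoss {K : ℕ} (A : ℝ) (y : Fin K) (z : Fin K → ℝ) : ℝ :=
  -A * (1 - softmax z y)

/-- Symmetric cross entropy Loss with weights `α = β = 1`. -/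
noncomputable def slLoss {K : ℕ} (A : ℝ) (y : Fin K) (z : Fin K → ℝ) : ℝ :=
  ceLoss y z + rceLoss A y z

/-- Gradient of the Symmetric cross entropy Loss with `α = β = 1`: for a one-hot label
`y` and clipping constant `A < 0`, the loss `ℓ_sl(z) = -log p_y(z) - A · (1 - p_y(z))`
satisfies `∂ℓ_sl/∂z_j = (p_j(z) - 1) - (A · p_j(z)² - A · p_j(z))` when `j = y`, and
`∂ℓ_sl/∂z_j = p_j(z) - A · p_j(z) · p_y(z)` when `j ≠ y`. -/
theorem slLoss_hasDerivAt {K : ℕ} (hK : 2 ≤ K) (A : ℝ) (hA : A < 0)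
    (z : Fin K → ℝ) (y j : Fin K) :
    (j = y →
      HasDerivAt (fun t => slLoss A y (Function.update z j t))
        ((softmax z j - 1) - (A * (softmax z j) ^ 2 - A * softmax z j)) (z j))
    ∧ (j ≠ y →
      HasDerivAt (fun t => slLoss A y (Function.update z j t))
        (softmax z j - A * softmax z j * softmax z y) (z j)) := by
  set C : ℝ := ∑ i ∈ univ.erase j, Real.exp (z i) with hCdef
  have hCpos : 0 < C := by
    apply Finset.sum_pos (fun i _ => Real.exp_pos _)
    have : 1 < (univ : Finset (Fin K)).card := by
      simp only [Finset.card_univ, Fintype.card_fin]; omega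
    obtain ⟨i, hi, hij⟩ := Finset.exists_mem_ne this j
    exact ⟨i, Finset.mem_erase.2 ⟨hij, hi⟩⟩
  have hsum : ∀ t : ℝ, ∑ i, Real.exp (Function.update z j t i) = Real.exp t + C := by
    intro t
    rw [← Finset.add_sum_erase _ _ (mem_univ j), Function.update_self]
    congr 1
    exact Finset.sum_congr rfl fun i hi =>
      congrArg Real.exp (Function.update_of_ne (Finset.mem_erase.1 hi).1 _ _)
  have hzsum : ∑ i, Real.exp (z i) = Real.exp (z j) + C := by
    rw [← Finset.add_sum_erase _ _ (mem_univ j)]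
  set x := z j
  have hSpos : ∀ t : ℝ, 0 < Real.exp t + C := fun t => by positivity
  have h1 : HasDerivAt (fun t => Real.exp t + C) (Real.exp x) x :=
    (Real.hasDerivAt_exp x).add_const C
  have h2 : HasDerivAt (fun t => Real.log (Real.exp t + C))
      (Real.exp x / (Real.exp x + C)) x := h1.log (hSpos x).ne'
  constructor
  · rintro rfl
    have h3 : HasDerivAt (fun t => Real.exp t / (Real.exp t + C))
        ((Real.exp x * (Real.exp x + C) - Real.exp x * Real.exp x) / (Real.exp x + C) ^ 2) x :=
      (Real.hasDerivAt_exp x).div h1 (hSpos x).ne'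
    have h4 : HasDerivAt
        (fun t => Real.log (Real.exp t + C) - t + -A * (1 - Real.exp t / (Real.exp t + C)))
        (Real.exp x / (Real.exp x + C) - 1 + -A *
          (0 - (Real.exp x * (Real.exp x + C) - Real.exp x * Real.exp x) / (Real.exp x + C) ^ 2))
        x := (h2.sub (hasDerivAt_id x)).add (((hasDerivAt_const x 1).sub h3).const_mul (-A))
    have heq : (fun t => slLoss A j (Function.update z j t)) =
        fun t => Real.log (Real.exp t + C) - t + -A * (1 - Real.exp t / (Real.exp t + C)) := by
      funext t
      simp only [slLoss, ceLoss, rceLoss, softmax, hsum, Function.update_self]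
      rw [Real.log_div (Real.exp_ne_zero t) (hSpos t).ne', Real.log_exp]
      ring
    rw [heq]
    convert h4 using 1
    simp only [softmax, hzsum]
    field_simp
    ring
  · intro hjy
    have h3 : HasDerivAt (fun t => Real.exp (z y) / (Real.exp t + C))
        ((0 * (Real.exp x + C) - Real.exp (z y) * Real.exp x) / (Real.exp x + C) ^ 2) x :=
      (hasDerivAt_const x (Real.exp (z y))).div h1 (hSpos x).ne'
    have h4 : HasDerivAt
        (fun t => Real.log (Real.exp t + C) - z y +
          -A * (1 - Real.exp (z y) / (Real.exp t + C)))
        (Real.exp x / (Real.exp x + C) + -A *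
          (0 - (0 * (Real.exp x + C) - Real.exp (z y) * Real.exp x) / (Real.exp x + C) ^ 2))
        x := by
      have := (h2.sub_const (z y)).add (((hasDerivAt_const x 1).sub h3).const_mul (-A))
      exact this.congr_deriv (by ring)
    have heq : (fun t => slLoss A y (Function.update z j t)) =
        fun t => Real.log (Real.exp t + C) - z y +
          -A * (1 - Real.exp (z y) / (Real.exp t + C)) := by
      funext t
      simp only [slLoss, ceLoss, rceLoss, softmax, hsum,
        Function.update_of_ne (Ne.symm hjy)]
      rw [Real.log_div (Real.exp_ne_zero (z y)) (hSpos t).ne', Real.log_exp]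
      ring
    rw [heq]
    convert h4 using 1
    simp only [softmax, hzsum]
    field_simp
    ring
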